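/- For the Request-Response game Γ_k = (G_k, Ω_k) on the graph G_k (where Player 1 first makes k binary choices between P_i and P'_i vertices from v to w, then Player 0 makes k binary choices between R_i and R'_i vertices from w through x to the self-looping vertex y at which all pairs are responded to), Player 0 wins from v, and every positional winning strategy in the simulating Büchi game Γ'_k = (G'_k, F') from (∅,1,0,v) that reaches a final vertex as soon as possible (an attractor strategy) yields a winning strategy f_k for Player 0 in Γ_k from v whose finite-state implementation requires memory of size at least 2^k: it must mimic each of the k decisions of Player 1, i.e., move to the R_i-vertex iff Player 1 moved to the P_i-vertex. -/

import Mathlib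

set_option linter.unusedVariables false

namespace Games

/-- A game arena: a directed graph whose vertices are partitioned between
Player 0 (`owner v = false`) and Player 1 (`owner v = true`). -/
structure GameGraph (V : Type*) where
  E : V → V → Prop
  owner : V → Bool

/-- An infinite path through the game graph. -/
def IsPlay {V : Type*} (G : GameGraph V) (ρ : ℕ → V) : Prop :=
  ∀ i, G.E (ρ i) (ρ (i + 1))

/-- A property of positions holds infinitely often. -/
def InfOften (p : ℕ → Prop) : Prop := ∀ n, ∃ m, n ≤ m ∧ p m

/-- The set of elements occurring infinitely often in a sequence. -/
def InfSet {α : Type*} (ρ : ℕ → α) : Set α := {u | InfOften fun i => ρ i = u}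

/-- Game simulation (Definition 1 of the paper): the game `(G, φ)` is simulated by the
game `(G', φ')` on the extended vertex set `S × V` with initial memory content `s0`. -/
structure IsSimulation {V S : Type*} (G : GameGraph V) (φ : (ℕ → V) → Prop)
    (G' : GameGraph (S × V)) (φ' : (ℕ → S × V) → Prop) (s0 : S) : Prop where
  owner_eq : ∀ (s : S) (v : V), G'.owner (s, v) = G.owner v
  edge_lift : ∀ (s : S) (v v' : V), G.E v v' → ∃ s', G'.E (s, v) (s', v')
  mem_unique : ∀ (s : S) (v : V) (p₁ p₂ : S × V), G'.E (s, v) p₁ → G'.E (s, v) p₂ → p₁.1 = p₂.1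
  edge_proj : ∀ (s s' : S) (v v' : V), G'.E (s, v) (s', v') → G.E v v'
  win_iff : ∀ ρ : ℕ → V, IsPlay G ρ → ∀ ρ' : ℕ → S × V,
      ρ' 0 = (s0, ρ 0) → (∀ i, (ρ' i).2 = ρ i) → IsPlay G' ρ' → (φ ρ ↔ φ' ρ')

/-- A play is consistent with the (history-dependent) strategy `f` of Player 0. -/
def StratConsistent {V : Type*} (G : GameGraph V) (f : List V → V → V) (ρ : ℕ → V) : Prop :=
  ∀ i, G.owner (ρ i) = false → ρ (i + 1) = f (List.ofFn fun j : Fin i => ρ j) (ρ i)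

/-- Player 0 has a strategy from `v` forcing every resulting play to satisfy `ψ`. -/
def ForcesFrom {V : Type*} (G : GameGraph V) (ψ : (ℕ → V) → Prop) (v : V) : Prop :=
  ∃ f : List V → V → V, (∀ (h : List V) (u : V), G.owner u = false → G.E u (f h u)) ∧
    ∀ ρ : ℕ → V, ρ 0 = v → IsPlay G ρ → StratConsistent G f ρ → ψ ρ

end Games
namespace Games

/-- Memory for the Büchi game simulating a Request-Response game with `k` pairs:
the set of currently open requests, a cyclic marker, and a flag that is set
exactly when the marker is reset to the first pair. -/
abbrev RRMem (k : ℕ) := Finset (Fin k) × Fin k × Bool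

open scoped Classical in
/-- The memory update of the Request-Response-to-Büchi game simulation (Remark 2):
`P' = (P ∪ {j | v ∈ P_j}) \ {j | v ∈ R_j}`, the marker is kept if it is still open
and cyclically increased otherwise, and the flag records a reset of the marker. -/
noncomputable def updRR {V : Type*} {k : ℕ} [NeZero k] (P R : Fin k → Set V)
    (s : RRMem k) (v : V) : RRMem k :=
  let P' := (s.1 ∪ Finset.univ.filter fun j => v ∈ P j) \ (Finset.univ.filter fun j => v ∈ R j)
  let i' := if s.2.1 ∈ P' then s.2.1 else s.2.1 + 1
  (P', i', decide (s.2.1.val = k - 1 ∧ i'.val = 0))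

/-- The game graph `G'` of the Büchi game simulating the Request-Response game. -/
noncomputable def RRBuchiGraph {V : Type*} {k : ℕ} [NeZero k] (G : GameGraph V)
    (P R : Fin k → Set V) : GameGraph (RRMem k × V) where
  E := fun p p' => G.E p.2 p'.2 ∧ p'.1 = updRR P R p.1 p.2
  owner := fun p => G.owner p.2

/-- The final vertices of the simulating Büchi game: those whose flag is set. -/
def RRFinal (k : ℕ) (V : Type*) : Set (RRMem k × V) := {p | p.1.2.2 = true}

/-- The Request-Response winning condition: every request is eventually responded. -/
def RRWin {V : Type*} {J : Type*} (P R : J → Set V) (ρ : ℕ → V) : Prop :=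
  ∀ (j : J) (i : ℕ), ρ i ∈ P j → ∃ i', i ≤ i' ∧ ρ i' ∈ R j

/-- The Büchi winning condition: the set `F` is visited infinitely often. -/
def BuchiWin {α : Type*} (F : Set α) (ρ : ℕ → α) : Prop := InfOften fun i => ρ i ∈ F

end Games
namespace Games

/-- The vertices of the Request-Response example graph `G_k` (Figure 2): Player 1's
choice positions `vv i` (with `vv 0 = v`), the request vertices `pv i b` (`b = false`
for `P_i`, `b = true` for `P'_i`), Player 0's choice positions `wv i` (with `wv 0 = w`),
the response vertices `rv i b` (`R_i` resp. `R'_i`), and the vertices `x` and `y`. -/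
inductive RRV (k : ℕ) : Type
  | vv (i : Fin k)
  | pv (i : Fin k) (b : Bool)
  | wv (i : Fin k)
  | rv (i : Fin k) (b : Bool)
  | x
  | y
deriving DecidableEq

/-- The edges of the example graph `G_k`. -/
def RRE (k : ℕ) : RRV k → RRV k → Prop
  | .vv i, .pv i' _ => i = i'
  | .pv i _, .vv i' => i'.val = i.val + 1
  | .pv i _, .wv i' => i.val = k - 1 ∧ i'.val = 0
  | .wv i, .rv i' _ => i = i'
  | .rv i _, .wv i' => i'.val = i.val + 1
  | .rv i _, .x => i.val = k - 1
  | .x, .y => True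
  | .y, .y => True
  | _, _ => False

/-- Vertex ownership in `G_k`: Player 1 owns the first half (the request phase),
Player 0 owns the rest. -/
def RROwner (k : ℕ) : RRV k → Bool
  | .vv _ => true
  | .pv _ _ => true
  | _ => false

/-- The example game graph `G_k`. -/
def RRGraph (k : ℕ) : GameGraph (RRV k) where
  E := RRE k
  owner := RROwner k

/-- The request sets of `Ω_k`: index `0` is the pair `(P₀, R₀)` with `P₀ = {v}`; index
`2i+1` is `P_{i+1}` and index `2i+2` is `P'_{i+1}`. -/
def RRP (k : ℕ) (hk : 0 < k) : Fin (2 * k + 1) → Set (RRV k) := fun j =>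
  if j.val = 0 then {RRV.vv ⟨0, hk⟩}
  else {RRV.pv ⟨(j.val - 1) / 2, by omega⟩ (decide ((j.val - 1) % 2 = 1))}

/-- The response sets of `Ω_k`: `R₀ = {w}`, and `R_{i}`, `R'_{i}` consist of the
corresponding response vertex together with `y` (at `y` all pairs are responded to). -/
def RRR (k : ℕ) (hk : 0 < k) : Fin (2 * k + 1) → Set (RRV k) := fun j =>
  if j.val = 0 then {RRV.wv ⟨0, hk⟩}
  else {RRV.rv ⟨(j.val - 1) / 2, by omega⟩ (decide ((j.val - 1) % 2 = 1)), RRV.y}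

/-- The levels of the `0`-attractor of the set `F`: from a vertex in level `n + 1`,
Player 0 can force a visit to `F` within `n + 1` steps. -/
def AttrLvl {W : Type*} (G : GameGraph W) (F : Set W) : ℕ → Set W
  | 0 => F
  | n + 1 => AttrLvl G F n ∪
      {u | (G.owner u = false ∧ ∃ u', G.E u u' ∧ u' ∈ AttrLvl G F n) ∨
           (G.owner u = true ∧ (∃ u', G.E u u') ∧ ∀ u', G.E u u' → u' ∈ AttrLvl G F n)}

/-- A positional strategy that reaches the set `F` as soon as possible
(an attractor strategy). -/
def IsAttractorStrategy {W : Type*} (G : GameGraph W) (F : Set W) (f : W → W) : Prop :=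
  ∀ (u : W) (n : ℕ), G.owner u = false → u ∈ AttrLvl G F (n + 1) → u ∉ AttrLvl G F n →
    f u ∈ AttrLvl G F n

/-- A Mealy machine (strategy automaton) with memory `M` over game positions `V`. -/
structure Mealy (V M : Type*) where
  m0 : M
  upd : M → V → M
  out : M → V → V

/-- The memory state of a Mealy machine after reading the play prefix `ρ 0 ⋯ ρ (i-1)`. -/
def mSt {V M : Type*} (Mc : Mealy V M) (ρ : ℕ → V) : ℕ → M
  | 0 => Mc.m0
  | i + 1 => Mc.upd (mSt Mc ρ i) (ρ i)

end Games
namespace Games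

/-- The memory contents attained along a play, under the deterministic memory update of
the Request-Response-to-Büchi game simulation, starting from memory content `s0`. -/
noncomputable def memTr {V : Type*} {n : ℕ} [NeZero n] (P R : Fin n → Set V)
    (s0 : RRMem n) (ρ : ℕ → V) : ℕ → RRMem n
  | 0 => s0
  | i + 1 => updRR P R (memTr P R s0 ρ i) (ρ i)


/-! ### Auxiliary development -/

section RRAux

variable {k : ℕ}

/-- Termination measure on the vertices of `G_k`. -/
def dVert (k : ℕ) : RRV k → ℕ
  | .vv i => 2*k+3 + 2*(k-1-i.val)
  | .pv i _ => 2*k+2 + 2*(k-1-i.val)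
  | .wv i => 2*(k-1-i.val)+3
  | .rv i _ => 2*(k-1-i.val)+2
  | .x => 1
  | .y => 0

lemma dVert_decr {u u' : RRV k} (h : RRE k u u') (hy : u ≠ RRV.y) :
    dVert k u' < dVert k u := by
  cases u with
  | vv i =>
    cases u' with
    | pv i' c => simp only [RRE] at h; subst h; simp [dVert]
    | vv i' | wv i' | rv i' c | x | y => exact absurd h (by simp [RRE])
  | pv i c =>
    cases u' with
    | vv i' =>
      simp only [RRE] at h
      have := i'.isLt
      simp only [dVert]; omega
    | wv i' =>
      simp only [RRE] at h
      have := i.isLt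
      simp only [dVert]; omega
    | pv i' c' | rv i' c' | x | y => exact absurd h (by simp [RRE])
  | wv i =>
    cases u' with
    | rv i' c => simp only [RRE] at h; subst h; simp [dVert]
    | vv i' | pv i' c | wv i' | x | y => exact absurd h (by simp [RRE])
  | rv i c =>
    cases u' with
    | wv i' =>
      simp only [RRE] at h
      have := i'.isLt
      simp only [dVert]; omega
    | x =>
      simp only [RRE] at h
      simp only [dVert]; omega
    | vv i' | pv i' c' | rv i' c' | y => exact absurd h (by simp [RRE])
  | x =>
    cases u' with
    | y => simp [dVert]
    | vv i' | pv i' c | wv i' | rv i' c | x => exact absurd h (by simp [RRE])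
  | y => exact absurd rfl hy

lemma reach_y (ρ : ℕ → RRV k) (hp : IsPlay (RRGraph k) ρ) :
    ∀ n, ∃ m, n ≤ m ∧ ρ m = RRV.y := by
  intro n
  by_cases hy : ρ n = RRV.y
  · exact ⟨n, le_refl n, hy⟩
  · have hlt : dVert k (ρ (n+1)) < dVert k (ρ n) := dVert_decr (hp n) hy
    have := reach_y ρ hp (n+1)
    obtain ⟨m, hm, hmy⟩ := this
    exact ⟨m, by omega, hmy⟩
termination_by n => dVert k (ρ n)

lemma reach_w0 (hk : 0 < k) (ρ : ℕ → RRV k) (hp : IsPlay (RRGraph k) ρ) :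
    ∀ n, ((∃ i, ρ n = RRV.vv i) ∨ (∃ i c, ρ n = RRV.pv i c)) →
      ∃ m, n ≤ m ∧ ρ m = RRV.wv ⟨0, hk⟩ := by
  intro n hcase
  have hy : ρ n ≠ RRV.y := by
    rcases hcase with ⟨i, h⟩ | ⟨i, c, h⟩ <;> simp [h]
  have hlt : dVert k (ρ (n+1)) < dVert k (ρ n) := dVert_decr (hp n) hy
  have hedge := hp n
  rcases hcase with ⟨i, h⟩ | ⟨i, c, h⟩
  · -- from vv i, the successor is a pv vertex
    have hsucc : ∃ i' c', ρ (n+1) = RRV.pv i' c' := by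
      rw [h] at hedge
      cases hv' : ρ (n+1) <;> rw [hv'] at hedge <;>
        first
          | exact ⟨_, _, rfl⟩
          | exact absurd hedge (by simp [RRGraph, RRE])
    obtain ⟨m, hm, hmy⟩ := reach_w0 hk ρ hp (n+1) (Or.inr hsucc)
    exact ⟨m, by omega, hmy⟩
  · -- from pv i c, the successor is vv or wv 0
    rw [h] at hedge
    cases hv' : ρ (n+1) with
    | vv i' =>
      obtain ⟨m, hm, hmy⟩ := reach_w0 hk ρ hp (n+1) (Or.inl ⟨i', hv'⟩)
      exact ⟨m, by omega, hmy⟩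
    | wv i' =>
      rw [hv'] at hedge
      have : i' = ⟨0, hk⟩ := by
        simp only [RRGraph, RRE] at hedge
        exact Fin.ext hedge.2
      exact ⟨n+1, by omega, by rw [hv', this]⟩
    | pv i' c' => rw [hv'] at hedge; exact absurd hedge (by simp [RRGraph, RRE])
    | rv i' c' => rw [hv'] at hedge; exact absurd hedge (by simp [RRGraph, RRE])
    | x => rw [hv'] at hedge; exact absurd hedge (by simp [RRGraph, RRE])
    | y => rw [hv'] at hedge; exact absurd hedge (by simp [RRGraph, RRE])
termination_by n _ => dVert k (ρ n)

/-- Every play of `G_k` satisfies the Request-Response condition `Ω_k`. -/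
lemma master_win (hk : 0 < k) (ρ : ℕ → RRV k) (hp : IsPlay (RRGraph k) ρ) :
    RRWin (RRP k hk) (RRR k hk) ρ := by
  intro j i hij
  by_cases hj : j.val = 0
  · have hvi : ρ i = RRV.vv ⟨0, hk⟩ := by
      simpa [RRP, hj] using hij
    obtain ⟨m, hm, hmy⟩ := reach_w0 hk ρ hp i (Or.inl ⟨_, hvi⟩)
    refine ⟨m, hm, ?_⟩
    simp [RRR, hj, hmy]
  · obtain ⟨m, hm, hmy⟩ := reach_y ρ hp i
    refine ⟨m, hm, ?_⟩
    simp [RRR, hj, hmy]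

/-- A default legal choice for Player 0 in `G_k`. -/
def fdef (k : ℕ) : RRV k → RRV k
  | .wv i => .rv i false
  | .rv i _ => if h : i.val + 1 < k then .wv ⟨i.val+1, h⟩ else .x
  | .x => .y
  | .y => .y
  | .vv i => .pv i false
  | .pv _ _ => .y

lemma fdef_legal (u : RRV k) (hu : RROwner k u = false) : RRE k u (fdef k u) := by
  cases u with
  | wv i => simp [fdef, RRE]
  | rv i c =>
    by_cases h : i.val + 1 < k
    · simp [fdef, h, RRE]
    · have := i.isLt
      simp [fdef, h, RRE]; omega
  | x => simp [fdef, RRE]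
  | y => simp [fdef, RRE]
  | vv i => simp [RROwner] at hu
  | pv i c => simp [RROwner] at hu

lemma part1 (hk : 0 < k) :
    ForcesFrom (RRGraph k) (RRWin (RRP k hk) (RRR k hk)) (RRV.vv ⟨0, hk⟩) := by
  refine ⟨fun _ u => fdef k u, fun h u hu => fdef_legal u hu, ?_⟩
  intro ρ h0 hp _
  exact master_win hk ρ hp

end RRAux


section RRMemAux

variable {k : ℕ}

lemma bool_toNat_le (c : Bool) : c.toNat ≤ 1 := by cases c <;> simp

/-- The index of the pair `(P_i, R_i)` (for `c = false`) resp. `(P'_i, R'_i)`. -/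
def jIdx (hk : 0 < k) (l : Fin k) (c : Bool) : Fin (2*k+1) :=
  ⟨2*l.val+1+c.toNat, by have := l.isLt; have := bool_toNat_le c; omega⟩

lemma jIdx_inj (hk : 0 < k) {l l' : Fin k} {c c' : Bool}
    (h : jIdx hk l c = jIdx hk l' c') : l = l' ∧ c = c' := by
  have hv : 2*l.val+1+c.toNat = 2*l'.val+1+c'.toNat := by
    have := congrArg Fin.val h
    simpa [jIdx] using this
  cases c <;> cases c' <;>
      simp only [Bool.toNat_false, Bool.toNat_true] at hv
  · exact ⟨Fin.ext (by omega), rfl⟩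
  · exact absurd hv (by omega)
  · exact absurd hv (by omega)
  · exact ⟨Fin.ext (by omega), rfl⟩

open Classical in
noncomputable def reqFilt (hk : 0 < k) (v : RRV k) : Finset (Fin (2*k+1)) :=
  Finset.univ.filter fun j => v ∈ RRP k hk j

open Classical in
noncomputable def respFilt (hk : 0 < k) (v : RRV k) : Finset (Fin (2*k+1)) :=
  Finset.univ.filter fun j => v ∈ RRR k hk j

lemma mem_reqFilt (hk : 0 < k) (v : RRV k) (j : Fin (2*k+1)) :
    j ∈ reqFilt hk v ↔ v ∈ RRP k hk j := by
  classical
  simp [reqFilt]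

lemma mem_respFilt (hk : 0 < k) (v : RRV k) (j : Fin (2*k+1)) :
    j ∈ respFilt hk v ↔ v ∈ RRR k hk j := by
  classical
  simp [respFilt]

lemma updRR_eq (hk : 0 < k) (s : RRMem (2*k+1)) (v : RRV k) :
    updRR (RRP k hk) (RRR k hk) s v =
      ((s.1 ∪ reqFilt hk v) \ respFilt hk v,
       (if s.2.1 ∈ (s.1 ∪ reqFilt hk v) \ respFilt hk v then s.2.1 else s.2.1 + 1),
       decide (s.2.1.val = 2*k+1-1 ∧
         (if s.2.1 ∈ (s.1 ∪ reqFilt hk v) \ respFilt hk v then s.2.1 else s.2.1+1).val = 0)) := by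
  rfl

-- membership of vertices in the request sets
lemma mem_RRP_vv (hk : 0 < k) (i : Fin k) (j : Fin (2*k+1)) :
    RRV.vv i ∈ RRP k hk j ↔ (j.val = 0 ∧ i = ⟨0, hk⟩) := by
  by_cases hj : j.val = 0 <;> simp [RRP, hj]

lemma mem_RRP_pv (hk : 0 < k) (i : Fin k) (c : Bool) (j : Fin (2*k+1)) :
    RRV.pv i c ∈ RRP k hk j ↔ j.val = 2*i.val+1+c.toNat := by
  unfold RRP
  by_cases hj : j.val = 0
  · rw [if_pos hj]
    exact iff_of_false (by simp) (by have := bool_toNat_le c; omega)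
  · rw [if_neg hj]
    simp only [Set.mem_singleton_iff, RRV.pv.injEq]
    constructor
    · rintro ⟨h1, h2⟩
      have h1' : i.val = (j.val-1)/2 := by rw [h1]
      have hdm := Nat.div_add_mod (j.val - 1) 2
      cases c with
      | false =>
        have hc : ¬((j.val-1)%2 = 1) := by simpa using h2.symm
        simp only [Bool.toNat_false]; omega
      | true =>
        have hc : (j.val-1)%2 = 1 := by simpa using h2.symm
        simp only [Bool.toNat_true]; omega
    · intro hv
      have hc := bool_toNat_le c
      have hd : (j.val-1)/2 = i.val := by omega
      have hm : (j.val-1)%2 = c.toNat := by omega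
      refine ⟨Fin.ext hd.symm, ?_⟩
      cases c with
      | false => simp only [Bool.toNat_false] at hm; simp [hm]
      | true => simp only [Bool.toNat_true] at hm; simp [hm]

lemma not_mem_RRP_wv (hk : 0 < k) (i : Fin k) (j : Fin (2*k+1)) :
    RRV.wv i ∉ RRP k hk j := by
  by_cases hj : j.val = 0 <;> simp [RRP, hj]

lemma not_mem_RRP_rv (hk : 0 < k) (i : Fin k) (c : Bool) (j : Fin (2*k+1)) :
    RRV.rv i c ∉ RRP k hk j := by
  by_cases hj : j.val = 0 <;> simp [RRP, hj]

lemma not_mem_RRP_x (hk : 0 < k) (j : Fin (2*k+1)) : RRV.x ∉ RRP k hk j := by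
  by_cases hj : j.val = 0 <;> simp [RRP, hj]

lemma not_mem_RRP_y (hk : 0 < k) (j : Fin (2*k+1)) : RRV.y ∉ RRP k hk j := by
  by_cases hj : j.val = 0 <;> simp [RRP, hj]

-- membership in the response sets
lemma mem_RRR_wv (hk : 0 < k) (i : Fin k) (j : Fin (2*k+1)) :
    RRV.wv i ∈ RRR k hk j ↔ (j.val = 0 ∧ i = ⟨0, hk⟩) := by
  by_cases hj : j.val = 0 <;> simp [RRR, hj]

lemma mem_RRR_rv (hk : 0 < k) (i : Fin k) (c : Bool) (j : Fin (2*k+1)) :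
    RRV.rv i c ∈ RRR k hk j ↔ j.val = 2*i.val+1+c.toNat := by
  unfold RRR
  by_cases hj : j.val = 0
  · rw [if_pos hj]
    exact iff_of_false (by simp) (by have := bool_toNat_le c; omega)
  · rw [if_neg hj]
    simp only [Set.mem_insert_iff, Set.mem_singleton_iff, RRV.rv.injEq]
    have hy : (RRV.rv i c = RRV.y) ↔ False := by simp
    rw [hy]
    simp only [or_false]
    constructor
    · rintro ⟨h1, h2⟩
      have h1' : i.val = (j.val-1)/2 := by rw [h1]
      have hdm := Nat.div_add_mod (j.val - 1) 2
      cases c with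
      | false =>
        have hc : ¬((j.val-1)%2 = 1) := by simpa using h2.symm
        simp only [Bool.toNat_false]; omega
      | true =>
        have hc : (j.val-1)%2 = 1 := by simpa using h2.symm
        simp only [Bool.toNat_true]; omega
    · intro hv
      have hc := bool_toNat_le c
      have hd : (j.val-1)/2 = i.val := by omega
      have hm : (j.val-1)%2 = c.toNat := by omega
      refine ⟨Fin.ext hd.symm, ?_⟩
      cases c with
      | false => simp only [Bool.toNat_false] at hm; simp [hm]
      | true => simp only [Bool.toNat_true] at hm; simp [hm]

lemma not_mem_RRR_vv (hk : 0 < k) (i : Fin k) (j : Fin (2*k+1)) :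
    RRV.vv i ∉ RRR k hk j := by
  by_cases hj : j.val = 0 <;> simp [RRR, hj]

lemma not_mem_RRR_pv (hk : 0 < k) (i : Fin k) (c : Bool) (j : Fin (2*k+1)) :
    RRV.pv i c ∉ RRR k hk j := by
  by_cases hj : j.val = 0 <;> simp [RRR, hj]

lemma not_mem_RRR_x (hk : 0 < k) (j : Fin (2*k+1)) : RRV.x ∉ RRR k hk j := by
  by_cases hj : j.val = 0 <;> simp [RRR, hj]

-- the filter sets
lemma reqFilt_vv0 (hk : 0 < k) : reqFilt hk (RRV.vv ⟨0, hk⟩) = {(0 : Fin (2*k+1))} := by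
  ext j
  rw [mem_reqFilt, mem_RRP_vv]
  rw [Finset.mem_singleton]
  constructor
  · rintro ⟨h, -⟩; exact Fin.ext h
  · rintro rfl; exact ⟨rfl, rfl⟩

lemma reqFilt_vv_pos (hk : 0 < k) (i : Fin k) (hi : i.val ≠ 0) :
    reqFilt hk (RRV.vv i) = ∅ := by
  ext j
  rw [mem_reqFilt, mem_RRP_vv]
  simp only [Finset.notMem_empty, iff_false]
  rintro ⟨-, h2⟩
  exact hi (by rw [h2])

lemma reqFilt_pv (hk : 0 < k) (i : Fin k) (c : Bool) :
    reqFilt hk (RRV.pv i c) = {jIdx hk i c} := by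
  ext j
  rw [mem_reqFilt, mem_RRP_pv, Finset.mem_singleton, Fin.ext_iff]
  rfl

lemma reqFilt_wv (hk : 0 < k) (i : Fin k) : reqFilt hk (RRV.wv i) = ∅ := by
  ext j; rw [mem_reqFilt]; simp [not_mem_RRP_wv]

lemma reqFilt_rv (hk : 0 < k) (i : Fin k) (c : Bool) : reqFilt hk (RRV.rv i c) = ∅ := by
  ext j; rw [mem_reqFilt]; simp [not_mem_RRP_rv]

lemma reqFilt_x (hk : 0 < k) : reqFilt hk (RRV.x : RRV k) = ∅ := by
  ext j; rw [mem_reqFilt]; simp [not_mem_RRP_x]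

lemma reqFilt_y (hk : 0 < k) : reqFilt hk (RRV.y : RRV k) = ∅ := by
  ext j; rw [mem_reqFilt]; simp [not_mem_RRP_y]

lemma respFilt_wv0 (hk : 0 < k) : respFilt hk (RRV.wv ⟨0, hk⟩) = {(0 : Fin (2*k+1))} := by
  ext j
  rw [mem_respFilt, mem_RRR_wv]
  rw [Finset.mem_singleton]
  constructor
  · rintro ⟨h, -⟩; exact Fin.ext h
  · rintro rfl; exact ⟨rfl, rfl⟩

lemma respFilt_wv_pos (hk : 0 < k) (i : Fin k) (hi : i.val ≠ 0) :
    respFilt hk (RRV.wv i) = ∅ := by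
  ext j
  rw [mem_respFilt, mem_RRR_wv]
  simp only [Finset.notMem_empty, iff_false]
  rintro ⟨-, h2⟩
  exact hi (by rw [h2])

lemma respFilt_rv (hk : 0 < k) (i : Fin k) (c : Bool) :
    respFilt hk (RRV.rv i c) = {jIdx hk i c} := by
  ext j
  rw [mem_respFilt, mem_RRR_rv, Finset.mem_singleton, Fin.ext_iff]
  rfl

lemma respFilt_vv (hk : 0 < k) (i : Fin k) : respFilt hk (RRV.vv i) = ∅ := by
  ext j; rw [mem_respFilt]; simp [not_mem_RRR_vv]

lemma respFilt_pv (hk : 0 < k) (i : Fin k) (c : Bool) : respFilt hk (RRV.pv i c) = ∅ := by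
  ext j; rw [mem_respFilt]; simp [not_mem_RRR_pv]

lemma respFilt_x (hk : 0 < k) : respFilt hk (RRV.x : RRV k) = ∅ := by
  ext j; rw [mem_respFilt]; simp [not_mem_RRR_x]

end RRMemAux


section RRSets

variable {k : ℕ}

open Classical in
/-- The requests `P_l`/`P'_l` (as chosen by `b`) with `l ≥ i`. -/
noncomputable def reqsHi (hk : 0 < k) (b : Fin k → Bool) (i : ℕ) : Finset (Fin (2*k+1)) :=
  Finset.univ.filter fun j => ∃ l : Fin k, i ≤ l.val ∧ j = jIdx hk l (b l)

open Classical in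
/-- The requests `P_l`/`P'_l` (as chosen by `b`) with `l < i`. -/
noncomputable def reqsLo (hk : 0 < k) (b : Fin k → Bool) (i : ℕ) : Finset (Fin (2*k+1)) :=
  Finset.univ.filter fun j => ∃ l : Fin k, l.val < i ∧ j = jIdx hk l (b l)

lemma mem_reqsHi (hk : 0 < k) (b : Fin k → Bool) (i : ℕ) (j : Fin (2*k+1)) :
    j ∈ reqsHi hk b i ↔ ∃ l : Fin k, i ≤ l.val ∧ j = jIdx hk l (b l) := by
  classical
  simp [reqsHi]

lemma mem_reqsLo (hk : 0 < k) (b : Fin k → Bool) (i : ℕ) (j : Fin (2*k+1)) :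
    j ∈ reqsLo hk b i ↔ ∃ l : Fin k, l.val < i ∧ j = jIdx hk l (b l) := by
  classical
  simp [reqsLo]

lemma reqsHi_val_lb (hk : 0 < k) (b : Fin k → Bool) (i : ℕ) (j : Fin (2*k+1))
    (hj : j ∈ reqsHi hk b i) : 2*i+1 ≤ j.val := by
  rw [mem_reqsHi] at hj
  obtain ⟨l, hl, rfl⟩ := hj
  show 2*i+1 ≤ 2*l.val+1+(b l).toNat
  omega

lemma zero_not_mem_reqsHi (hk : 0 < k) (b : Fin k → Bool) (i : ℕ) :
    (0 : Fin (2*k+1)) ∉ reqsHi hk b i := by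
  intro h
  have := reqsHi_val_lb hk b i _ h
  simp at this

lemma zero_not_mem_reqsLo (hk : 0 < k) (b : Fin k → Bool) (i : ℕ) :
    (0 : Fin (2*k+1)) ∉ reqsLo hk b i := by
  rw [mem_reqsLo]
  rintro ⟨l, hl, hv⟩
  have h2 : (0 : Fin (2*k+1)).val = 2*l.val+1+(b l).toNat := by rw [hv]; rfl
  rw [Fin.val_zero] at h2
  omega

lemma mem_reqsHi_jIdx (hk : 0 < k) (b : Fin k → Bool) (i : ℕ) (l : Fin k) :
    jIdx hk l (b l) ∈ reqsHi hk b i ↔ i ≤ l.val := by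
  rw [mem_reqsHi]
  constructor
  · rintro ⟨l', hl', hv⟩
    obtain ⟨rfl, -⟩ := jIdx_inj hk hv
    exact hl'
  · intro h; exact ⟨l, h, rfl⟩

lemma reqsHi_succ (hk : 0 < k) (b : Fin k → Bool) (i : Fin k) :
    reqsHi hk b i.val \ {jIdx hk i (b i)} = reqsHi hk b (i.val+1) := by
  ext j
  rw [Finset.mem_sdiff, Finset.mem_singleton, mem_reqsHi, mem_reqsHi]
  constructor
  · rintro ⟨⟨l, hl, rfl⟩, hne⟩
    refine ⟨l, ?_, rfl⟩
    rcases Nat.lt_or_ge i.val l.val with h | h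
    · omega
    · exfalso
      have : l = i := Fin.ext (by omega)
      exact hne (by rw [this])
  · rintro ⟨l, hl, rfl⟩
    refine ⟨⟨l, by omega, rfl⟩, ?_⟩
    intro hv
    obtain ⟨rfl, -⟩ := jIdx_inj hk hv
    omega

lemma reqsHi_k (hk : 0 < k) (b : Fin k → Bool) : reqsHi hk b k = ∅ := by
  ext j
  rw [mem_reqsHi]
  simp only [Finset.notMem_empty, iff_false]
  rintro ⟨l, hl, -⟩
  exact absurd hl (by have := l.isLt; omega)

lemma reqsLo_zero (hk : 0 < k) (b : Fin k → Bool) : reqsLo hk b 0 = ∅ := by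
  ext j
  rw [mem_reqsLo]
  simp

lemma reqsLo_succ (hk : 0 < k) (b : Fin k → Bool) (i : ℕ) (hi : i < k) :
    reqsLo hk b (i+1) = insert (jIdx hk ⟨i, hi⟩ (b ⟨i, hi⟩)) (reqsLo hk b i) := by
  ext j
  rw [mem_reqsLo, Finset.mem_insert, mem_reqsLo]
  constructor
  · rintro ⟨l, hl, rfl⟩
    rcases Nat.lt_or_ge l.val i with h | h
    · exact Or.inr ⟨l, h, rfl⟩
    · have hli : l = ⟨i, hi⟩ := Fin.ext (show l.val = i by omega)
      exact Or.inl (by rw [hli])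
  · rintro (hv | ⟨l, hl, rfl⟩)
    · exact ⟨⟨i, hi⟩, Nat.lt_succ_self i, hv⟩
    · exact ⟨l, by omega, rfl⟩

lemma reqsLo_k (hk : 0 < k) (b : Fin k → Bool) : reqsLo hk b k = reqsHi hk b 0 := by
  ext j
  rw [mem_reqsLo, mem_reqsHi]
  constructor
  · rintro ⟨l, hl, rfl⟩; exact ⟨l, by omega, rfl⟩
  · rintro ⟨l, hl, rfl⟩; exact ⟨l, l.isLt, rfl⟩

lemma val_le_not_mem_reqsHi (hk : 0 < k) (b : Fin k → Bool) (i : ℕ) (j : Fin (2*k+1))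
    (hj : j.val ≤ 2*i) : j ∉ reqsHi hk b i := by
  intro h
  have := reqsHi_val_lb hk b i j h
  omega

lemma mem_reqsHi_odd (hk : 0 < k) (b : Fin k → Bool) (i : ℕ) (hi : i < k)
    (h : 2*i+1 < 2*k+1) :
    (⟨2*i+1, h⟩ : Fin (2*k+1)) ∈ reqsHi hk b i ↔ b ⟨i, hi⟩ = false := by
  rw [mem_reqsHi]
  constructor
  · rintro ⟨l, hl, hv⟩
    have hval : 2*i+1 = 2*l.val+1+(b l).toNat := by
      have := congrArg Fin.val hv
      simpa [jIdx] using this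
    have hbt := bool_toNat_le (b l)
    have hli : l.val = i := by omega
    have hl0 : (b l).toNat = 0 := by omega
    have : l = ⟨i, hi⟩ := Fin.ext hli
    rw [← this]
    cases hbl : b l
    · rfl
    · rw [hbl] at hl0; simp at hl0
  · intro hb
    refine ⟨⟨i, hi⟩, le_refl _, ?_⟩
    apply Fin.ext
    simp [jIdx, hb]

lemma mem_reqsHi_even (hk : 0 < k) (b : Fin k → Bool) (i : ℕ) (hi : i < k)
    (h : 2*i+2 < 2*k+1) :
    (⟨2*i+2, h⟩ : Fin (2*k+1)) ∈ reqsHi hk b i ↔ b ⟨i, hi⟩ = true := by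
  rw [mem_reqsHi]
  constructor
  · rintro ⟨l, hl, hv⟩
    have hval : 2*i+2 = 2*l.val+1+(b l).toNat := by
      have := congrArg Fin.val hv
      simpa [jIdx] using this
    have hbt := bool_toNat_le (b l)
    have hli : l.val = i := by omega
    have hl1 : (b l).toNat = 1 := by omega
    have : l = ⟨i, hi⟩ := Fin.ext hli
    rw [← this]
    cases hbl : b l
    · rw [hbl] at hl1; simp at hl1
    · rfl
  · intro hb
    refine ⟨⟨i, hi⟩, le_refl _, ?_⟩
    apply Fin.ext
    simp [jIdx, hb]

lemma jIdx_not_mem_reqsHi (hk : 0 < k) (b : Fin k → Bool) (i : Fin k) (c : Bool)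
    (hc : c ≠ b i) : jIdx hk i c ∉ reqsHi hk b i.val := by
  rw [mem_reqsHi]
  rintro ⟨l, hl, hv⟩
  obtain ⟨rfl, hceq⟩ := jIdx_inj hk hv
  exact hc hceq

end RRSets

section RRStates

variable {k : ℕ}

/-- The memory content at the position `wv i` along the canonical play. -/
noncomputable def sW (hk : 0 < k) (b : Fin k → Bool) (i : Fin k) : RRMem (2*k+1) :=
  ((if i.val = 0 then insert 0 (reqsHi hk b 0) else reqsHi hk b i.val),
   ⟨2*i.val, by have := i.isLt; omega⟩, false)

/-- The memory content at the position `rv i c` along the canonical play. -/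
noncomputable def sR (hk : 0 < k) (b : Fin k → Bool) (i : Fin k) : RRMem (2*k+1) :=
  (reqsHi hk b i.val, ⟨2*i.val+1, by have := i.isLt; omega⟩, false)

lemma fin_mk_add_one (a : ℕ) (h' : a < 2*k+1) (h : a+1 < 2*k+1) (hk : 0 < k) :
    (⟨a, h'⟩ : Fin (2*k+1)) + 1 = ⟨a+1, h⟩ := by
  apply Fin.ext
  simp only [Fin.val_add, Fin.val_one']
  rw [Nat.mod_eq_of_lt (show 1 < 2*k+1 by omega), Nat.mod_eq_of_lt h]

lemma fin_mk_last_add_one (h : 2*k < 2*k+1) (hk : 0 < k) :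
    (⟨2*k, h⟩ : Fin (2*k+1)) + 1 = 0 := by
  apply Fin.ext
  simp only [Fin.val_add, Fin.val_one']
  rw [Nat.mod_eq_of_lt (show 1 < 2*k+1 by omega)]
  simp

lemma updW (hk : 0 < k) (b : Fin k → Bool) (i : Fin k) :
    updRR (RRP k hk) (RRR k hk) (sW hk b i) (RRV.wv i) = sR hk b i := by
  rw [updRR_eq]
  have hP : ((sW hk b i).1 ∪ reqFilt hk (RRV.wv i)) \ respFilt hk (RRV.wv i)
      = reqsHi hk b i.val := by
    rw [reqFilt_wv]
    by_cases hi : i.val = 0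
    · have : i = ⟨0, hk⟩ := Fin.ext hi
      rw [this]
      rw [respFilt_wv0]
      show (insert 0 (reqsHi hk b 0) ∪ ∅) \ {0} = reqsHi hk b (0:ℕ)
      rw [Finset.union_empty]
      ext j
      rw [Finset.mem_sdiff, Finset.mem_insert, Finset.mem_singleton]
      constructor
      · rintro ⟨h1 | h1, h2⟩
        · exact absurd h1 h2
        · exact h1
      · intro hj
        refine ⟨Or.inr hj, ?_⟩
        rintro rfl
        exact zero_not_mem_reqsHi hk b 0 hj
    · rw [respFilt_wv_pos hk i hi]
      simp [sW, hi]
  have hm : (sW hk b i).2.1 ∉ ((sW hk b i).1 ∪ reqFilt hk (RRV.wv i)) \ respFilt hk (RRV.wv i) := by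
    rw [hP]
    exact val_le_not_mem_reqsHi hk b i.val _ (le_refl _)
  rw [if_neg hm]
  have hmk : (sW hk b i).2.1 + 1 = (⟨2*i.val+1, by have := i.isLt; omega⟩ : Fin (2*k+1)) := by
    show (⟨2*i.val, _⟩ : Fin (2*k+1)) + 1 = _
    exact fin_mk_add_one _ _ _ hk
  simp only [sR, Prod.mk.injEq]
  refine ⟨hP, hmk, ?_⟩
  apply decide_eq_false
  rintro ⟨h1, -⟩
  have hval : ((sW hk b i).2.1).val = 2*i.val := rfl
  rw [hval] at h1
  have := i.isLt
  omega

lemma updR (hk : 0 < k) (b : Fin k → Bool) (i : Fin k) :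
    updRR (RRP k hk) (RRR k hk) (sR hk b i) (RRV.rv i (b i)) =
      (reqsHi hk b (i.val+1), ⟨2*i.val+2, by have := i.isLt; omega⟩, false) := by
  rw [updRR_eq]
  have hP : ((sR hk b i).1 ∪ reqFilt hk (RRV.rv i (b i))) \ respFilt hk (RRV.rv i (b i))
      = reqsHi hk b (i.val+1) := by
    rw [reqFilt_rv, respFilt_rv, Finset.union_empty]
    exact reqsHi_succ hk b i
  have hm : (sR hk b i).2.1 ∉ ((sR hk b i).1 ∪ reqFilt hk (RRV.rv i (b i))) \ respFilt hk (RRV.rv i (b i)) := by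
    rw [hP]
    exact val_le_not_mem_reqsHi hk b (i.val+1) _ (by show 2*i.val+1 ≤ 2*(i.val+1); omega)
  rw [if_neg hm]
  have hmk : (sR hk b i).2.1 + 1 = (⟨2*i.val+2, by have := i.isLt; omega⟩ : Fin (2*k+1)) := by
    show (⟨2*i.val+1, _⟩ : Fin (2*k+1)) + 1 = _
    exact fin_mk_add_one _ _ _ hk
  simp only [Prod.mk.injEq]
  refine ⟨hP, hmk, ?_⟩
  apply decide_eq_false
  rintro ⟨h1, -⟩
  have hval : ((sR hk b i).2.1).val = 2*i.val+1 := rfl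
  rw [hval] at h1
  have := i.isLt
  omega

lemma updX (hk : 0 < k) :
    updRR (RRP k hk) (RRR k hk) (∅, ⟨2*k, by omega⟩, false) (RRV.x : RRV k) =
      (∅, 0, true) := by
  rw [updRR_eq]
  have hP : ((∅ : Finset (Fin (2*k+1))) ∪ reqFilt hk (RRV.x : RRV k)) \ respFilt hk RRV.x
      = ∅ := by
    rw [reqFilt_x, respFilt_x]
    simp
  have hm : (⟨2*k, by omega⟩ : Fin (2*k+1)) ∉
      ((∅ : Finset (Fin (2*k+1))) ∪ reqFilt hk (RRV.x : RRV k)) \ respFilt hk RRV.x := by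
    rw [hP]; simp
  rw [if_neg hm]
  simp only [Prod.mk.injEq]
  refine ⟨hP, fin_mk_last_add_one _ hk, ?_⟩
  apply decide_eq_true
  refine ⟨show 2*k = 2*k+1-1 by omega, ?_⟩
  rw [fin_mk_last_add_one _ hk]
  simp

lemma updVV0 (hk : 0 < k) :
    updRR (RRP k hk) (RRR k hk) (∅, 0, false) (RRV.vv ⟨0, hk⟩) =
      ({0}, 0, false) := by
  rw [updRR_eq]
  have hP : ((∅ : Finset (Fin (2*k+1))) ∪ reqFilt hk (RRV.vv ⟨0, hk⟩)) \ respFilt hk (RRV.vv ⟨0, hk⟩)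
      = {0} := by
    rw [reqFilt_vv0, respFilt_vv]
    simp
  have hm : (0 : Fin (2*k+1)) ∈
      ((∅ : Finset (Fin (2*k+1))) ∪ reqFilt hk (RRV.vv ⟨0, hk⟩)) \ respFilt hk (RRV.vv ⟨0, hk⟩) := by
    rw [hP]; simp
  rw [if_pos hm]
  simp only [Prod.mk.injEq]
  refine ⟨hP, trivial, ?_⟩
  apply decide_eq_false
  rintro ⟨h1, -⟩
  simp at h1
  omega

lemma updVV_pos (hk : 0 < k) (i : Fin k) (hi : i.val ≠ 0) (P : Finset (Fin (2*k+1)))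
    (h0 : (0 : Fin (2*k+1)) ∈ P) :
    updRR (RRP k hk) (RRR k hk) (P, 0, false) (RRV.vv i) = (P, 0, false) := by
  rw [updRR_eq]
  have hP : (P ∪ reqFilt hk (RRV.vv i)) \ respFilt hk (RRV.vv i) = P := by
    rw [reqFilt_vv_pos hk i hi, respFilt_vv]
    simp
  have hm : (0 : Fin (2*k+1)) ∈ (P ∪ reqFilt hk (RRV.vv i)) \ respFilt hk (RRV.vv i) := by
    rw [hP]; exact h0
  rw [if_pos hm]
  simp only [Prod.mk.injEq]
  refine ⟨hP, trivial, ?_⟩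
  apply decide_eq_false
  rintro ⟨h1, -⟩
  simp at h1
  omega

lemma updPV (hk : 0 < k) (i : Fin k) (c : Bool) (P : Finset (Fin (2*k+1)))
    (h0 : (0 : Fin (2*k+1)) ∈ P) :
    updRR (RRP k hk) (RRR k hk) (P, 0, false) (RRV.pv i c) =
      (insert (jIdx hk i c) P, 0, false) := by
  rw [updRR_eq]
  have hP : (P ∪ reqFilt hk (RRV.pv i c)) \ respFilt hk (RRV.pv i c)
      = insert (jIdx hk i c) P := by
    rw [reqFilt_pv, respFilt_pv]
    rw [Finset.sdiff_empty, Finset.union_comm]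
    rfl
  have hm : (0 : Fin (2*k+1)) ∈ (P ∪ reqFilt hk (RRV.pv i c)) \ respFilt hk (RRV.pv i c) := by
    rw [hP]; exact Finset.mem_insert_of_mem h0
  rw [if_pos hm]
  simp only [Prod.mk.injEq]
  refine ⟨hP, trivial, ?_⟩
  apply decide_eq_false
  rintro ⟨h1, -⟩
  simp at h1
  omega

end RRStates


section RRPlay

variable {k : ℕ}

/-- The canonical play in which Player 1 plays according to the choice vector `b`
and Player 0 responds correctly. -/
def playB (hk : 0 < k) (b : Fin k → Bool) (n : ℕ) : RRV k :=
  if n < 2*k then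
    (if n % 2 = 0 then RRV.vv ⟨n/2 % k, Nat.mod_lt _ hk⟩
     else RRV.pv ⟨n/2 % k, Nat.mod_lt _ hk⟩ (b ⟨n/2 % k, Nat.mod_lt _ hk⟩))
  else if n < 4*k then
    (if n % 2 = 0 then RRV.wv ⟨(n-2*k)/2 % k, Nat.mod_lt _ hk⟩
     else RRV.rv ⟨(n-2*k)/2 % k, Nat.mod_lt _ hk⟩ (b ⟨(n-2*k)/2 % k, Nat.mod_lt _ hk⟩))
  else if n = 4*k then RRV.x else RRV.y

lemma playB_vv (hk : 0 < k) (b : Fin k → Bool) (i : ℕ) (hi : i < k) :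
    playB hk b (2*i) = RRV.vv ⟨i, hi⟩ := by
  unfold playB
  rw [if_pos (by omega), if_pos (by omega)]
  have h1 : 2*i/2 % k = i := by
    rw [show 2*i/2 = i by omega, Nat.mod_eq_of_lt hi]
  simp only [h1]

lemma playB_pv (hk : 0 < k) (b : Fin k → Bool) (i : ℕ) (hi : i < k) :
    playB hk b (2*i+1) = RRV.pv ⟨i, hi⟩ (b ⟨i, hi⟩) := by
  unfold playB
  rw [if_pos (by omega), if_neg (by omega)]
  have h1 : (2*i+1)/2 % k = i := by
    rw [show (2*i+1)/2 = i by omega, Nat.mod_eq_of_lt hi]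
  simp only [h1]

lemma playB_wv (hk : 0 < k) (b : Fin k → Bool) (i : ℕ) (hi : i < k) :
    playB hk b (2*k+2*i) = RRV.wv ⟨i, hi⟩ := by
  unfold playB
  rw [if_neg (by omega), if_pos (by omega), if_pos (by omega)]
  have h1 : (2*k+2*i-2*k)/2 % k = i := by
    rw [show (2*k+2*i-2*k)/2 = i by omega, Nat.mod_eq_of_lt hi]
  simp only [h1]

lemma playB_rv (hk : 0 < k) (b : Fin k → Bool) (i : ℕ) (hi : i < k) :
    playB hk b (2*k+2*i+1) = RRV.rv ⟨i, hi⟩ (b ⟨i, hi⟩) := by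
  unfold playB
  rw [if_neg (by omega), if_pos (by omega), if_neg (by omega)]
  have h1 : (2*k+2*i+1-2*k)/2 % k = i := by
    rw [show (2*k+2*i+1-2*k)/2 = i by omega, Nat.mod_eq_of_lt hi]
  simp only [h1]

lemma playB_x (hk : 0 < k) (b : Fin k → Bool) : playB hk b (4*k) = RRV.x := by
  unfold playB
  rw [if_neg (by omega), if_neg (by omega), if_pos rfl]

lemma playB_y (hk : 0 < k) (b : Fin k → Bool) (n : ℕ) (hn : 4*k < n) :
    playB hk b n = RRV.y := by
  unfold playB
  rw [if_neg (by omega), if_neg (by omega), if_neg (by omega)]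

lemma playB_zero (hk : 0 < k) (b : Fin k → Bool) : playB hk b 0 = RRV.vv ⟨0, hk⟩ := by
  have := playB_vv hk b 0 hk
  simpa using this

lemma playB_isPlay (hk : 0 < k) (b : Fin k → Bool) : IsPlay (RRGraph k) (playB hk b) := by
  intro n
  show RRE k (playB hk b n) (playB hk b (n+1))
  rcases Nat.lt_or_ge n (2*k) with h2k | h2k
  · rcases Nat.even_or_odd n with ⟨i, hi⟩ | ⟨i, hi⟩
    · have hik : i < k := by omega
      rw [show n = 2*i by omega, show 2*i+1 = 2*i+1 from rfl]
      rw [playB_vv hk b i hik, playB_pv hk b i hik]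
      show (⟨i, hik⟩ : Fin k) = ⟨i, hik⟩
      rfl
    · have hik : i < k := by omega
      rw [show n = 2*i+1 by omega]
      rw [playB_pv hk b i hik]
      rcases Nat.lt_or_ge (i+1) k with hik1 | hik1
      · rw [show (2*i+1)+1 = 2*(i+1) by ring, playB_vv hk b (i+1) hik1]
        show (⟨i+1, hik1⟩ : Fin k).val = (⟨i, hik⟩ : Fin k).val + 1
        rfl
      · have hieq : i = k-1 := by omega
        rw [show (2*i+1)+1 = 2*k+2*0 by omega, playB_wv hk b 0 hk]
        exact ⟨hieq, rfl⟩
  · rcases Nat.lt_or_ge n (4*k) with h4k | h4k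
    · rcases Nat.even_or_odd (n - 2*k) with ⟨i, hi⟩ | ⟨i, hi⟩
      · have hik : i < k := by omega
        rw [show n = 2*k+2*i by omega]
        rw [playB_wv hk b i hik, show 2*k+2*i+1 = 2*k+2*i+1 from rfl,
          playB_rv hk b i hik]
        show (⟨i, hik⟩ : Fin k) = ⟨i, hik⟩
        rfl
      · have hik : i < k := by omega
        rw [show n = 2*k+2*i+1 by omega]
        rw [playB_rv hk b i hik]
        rcases Nat.lt_or_ge (i+1) k with hik1 | hik1
        · rw [show (2*k+2*i+1)+1 = 2*k+2*(i+1) by ring, playB_wv hk b (i+1) hik1]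
          show (⟨i+1, hik1⟩ : Fin k).val = (⟨i, hik⟩ : Fin k).val + 1
          rfl
        · have hieq : i = k-1 := by omega
          rw [show (2*k+2*i+1)+1 = 4*k by omega, playB_x hk b]
          show (⟨i, hik⟩ : Fin k).val = k - 1
          exact hieq
    · rcases Nat.eq_or_lt_of_le h4k with h4e | h4lt
      · have hn4 : n = 4*k := h4e.symm
        subst hn4
        rw [playB_x hk b, playB_y hk b (4*k+1) (by omega)]
        trivial
      · rw [playB_y hk b n h4lt, playB_y hk b (n+1) (by omega)]
        trivial

lemma memTr_succ {V : Type*} {n : ℕ} [NeZero n] (P R : Fin n → Set V)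
    (s0 : RRMem n) (ρ : ℕ → V) (i : ℕ) :
    memTr P R s0 ρ (i+1) = updRR P R (memTr P R s0 ρ i) (ρ i) := rfl

/-- Phase 1: the memory contents while Player 1 makes its choices. -/
lemma memPhase1 (hk : 0 < k) (b : Fin k → Bool) :
    ∀ i : ℕ, i ≤ k →
      memTr (RRP k hk) (RRR k hk) (∅, 0, false) (playB hk b) (2*i) =
        ((if i = 0 then ∅ else insert 0 (reqsLo hk b i)), 0, false) := by
  intro i
  induction i with
  | zero => intro _; rfl
  | succ i ih =>
    intro hik
    have hi : i < k := by omega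
    have h1 := ih (by omega)
    have e2 : 2*(i+1) = (2*i+1)+1 := by ring
    rw [e2, memTr_succ, memTr_succ, h1]
    rw [playB_vv hk b i hi, playB_pv hk b i hi]
    by_cases hi0 : i = 0
    · subst hi0
      rw [if_pos rfl]
      have hv0 : (⟨0, hi⟩ : Fin k) = ⟨0, hk⟩ := rfl
      rw [hv0, updVV0 hk]
      rw [updPV hk _ _ _ (Finset.mem_singleton_self 0)]
      rw [if_neg (by omega)]
      rw [reqsLo_succ hk b 0 hi, reqsLo_zero]
      have h0 : (⟨0, hi⟩ : Fin k) = ⟨0, hk⟩ := rfl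
      rw [h0, Finset.pair_comm]
      simp
    · rw [if_neg hi0]
      rw [updVV_pos hk ⟨i, hi⟩ hi0 _ (Finset.mem_insert_self 0 _)]
      rw [updPV hk _ _ _ (Finset.mem_insert_self 0 _)]
      rw [if_neg (by omega)]
      rw [reqsLo_succ hk b i hi]
      rw [Finset.insert_comm]

/-- Phase 2: the memory contents while Player 0 responds. -/
lemma memPhase2 (hk : 0 < k) (b : Fin k → Bool) :
    ∀ i : ℕ, ∀ hi : i < k,
      memTr (RRP k hk) (RRR k hk) (∅, 0, false) (playB hk b) (2*k+2*i) =
        sW hk b ⟨i, hi⟩ := by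
  intro i
  induction i with
  | zero =>
    intro hi
    have h1 := memPhase1 hk b k (le_refl k)
    rw [show 2*k+2*0 = 2*k by ring, h1, if_neg (by omega), reqsLo_k hk b]
    have hsw : sW hk b ⟨0, hi⟩ = (insert 0 (reqsHi hk b 0), ⟨0, by omega⟩, false) := by
      unfold sW
      rw [if_pos rfl]
      rfl
    rw [hsw]
    exact Prod.ext rfl (Prod.ext (Fin.ext (by simp)) rfl)
  | succ i ih =>
    intro hi
    have hik : i < k := by omega
    have h1 := ih hik
    have e2 : 2*k+2*(i+1) = ((2*k+2*i)+1)+1 := by ring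
    rw [e2, memTr_succ, memTr_succ, h1]
    rw [playB_wv hk b i hik]
    rw [show (2*k+2*i)+1 = 2*k+2*i+1 from rfl, playB_rv hk b i hik]
    rw [updW hk b ⟨i, hik⟩]
    rw [updR hk b ⟨i, hik⟩]
    have hsw : sW hk b ⟨i+1, hi⟩ = (reqsHi hk b (i+1), ⟨2*(i+1), by omega⟩, false) := by
      unfold sW
      rw [if_neg (Nat.succ_ne_zero i)]
    rw [hsw]
    exact Prod.ext rfl (Prod.ext (Fin.ext (show 2*i+2 = 2*(i+1) by ring)) rfl)

lemma memPhase2R (hk : 0 < k) (b : Fin k → Bool) (i : ℕ) (hi : i < k) :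
    memTr (RRP k hk) (RRR k hk) (∅, 0, false) (playB hk b) (2*k+2*i+1) =
      sR hk b ⟨i, hi⟩ := by
  rw [show 2*k+2*i+1 = (2*k+2*i)+1 from rfl, memTr_succ, memPhase2 hk b i hi,
    playB_wv hk b i hi, updW hk b ⟨i, hi⟩]

end RRPlay


section RRAttract

variable {k : ℕ}

open Classical in
/-- Certified number of imminent "stuck" steps of the marker. -/
noncomputable def Sfun (hk : 0 < k) (u : RRMem (2*k+1) × RRV k) : ℕ :=
  if u.1.2.1 ∈ (u.1.1 ∪ reqFilt hk u.2) \ respFilt hk u.2 then 1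
  else if u.1.2.1.val ≠ 2*k ∧ (u.1.2.1 + 1) ∈ (u.1.1 ∪ reqFilt hk u.2) \ respFilt hk u.2
      ∧ (∃ i c, u.2 = RRV.rv i c) then 1
  else 0

open Classical in
/-- A lower bound on the number of steps needed to reach a final vertex. -/
noncomputable def Lfun (hk : 0 < k) (u : RRMem (2*k+1) × RRV k) : ℕ :=
  if u.1.2.2 = true then 0 else (2*k+1 - u.1.2.1.val) + Sfun hk u

lemma Sfun_pair (hk : 0 < k) (P : Finset (Fin (2*k+1))) (m : Fin (2*k+1)) (fl : Bool)
    (v : RRV k) :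
    Sfun hk ((P, m, fl), v) =
      if m ∈ (P ∪ reqFilt hk v) \ respFilt hk v then 1
      else if m.val ≠ 2*k ∧ (m + 1) ∈ (P ∪ reqFilt hk v) \ respFilt hk v
          ∧ (∃ i c, v = RRV.rv i c) then 1
      else 0 := rfl

lemma Lfun_pair (hk : 0 < k) (P : Finset (Fin (2*k+1))) (m : Fin (2*k+1)) (fl : Bool)
    (v : RRV k) :
    Lfun hk ((P, m, fl), v) =
      if fl = true then 0 else (2*k+1 - m.val) + Sfun hk ((P, m, fl), v) := rfl

lemma Sfun_le_one (hk : 0 < k) (u : RRMem (2*k+1) × RRV k) : Sfun hk u ≤ 1 := by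
  unfold Sfun
  split
  · exact le_refl 1
  · split
    · exact le_refl 1
    · exact Nat.zero_le 1

/-- Key step inequality: along any edge of the Büchi graph, `Lfun` drops by at most 1. -/
lemma Lfun_step (hk : 0 < k) (u u' : RRMem (2*k+1) × RRV k)
    (h : (RRBuchiGraph (RRGraph k) (RRP k hk) (RRR k hk)).E u u') :
    Lfun hk u ≤ Lfun hk u' + 1 := by
  obtain ⟨⟨P, m, fl⟩, v⟩ := u
  obtain ⟨s', v'⟩ := u'
  have hE : RRE k v v' := h.1
  have hupd : s' = updRR (RRP k hk) (RRR k hk) (P, m, fl) v := h.2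
  cases fl with
  | true => simp [Lfun]
  | false =>
    rw [updRR_eq] at hupd
    dsimp only at hupd
    subst hupd
    by_cases hmP : m ∈ (P ∪ reqFilt hk v) \ respFilt hk v
    · rw [if_pos hmP]
      have hfl : decide (m.val = 2*k+1-1 ∧ m.val = 0) = false := by
        apply decide_eq_false
        rintro ⟨h1, h2⟩
        omega
      rw [hfl]
      rw [Lfun_pair, Lfun_pair, if_neg (by simp), if_neg (by simp)]
      have hs1 := Sfun_le_one hk ((P, m, false), v)
      have hs2 := Nat.zero_le (Sfun hk (((P ∪ reqFilt hk v) \ respFilt hk v, m, false), v'))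
      omega
    · rw [if_neg hmP]
      by_cases hm2k : m.val = 2*k
      · have hmeq : m = ⟨2*k, by omega⟩ := Fin.ext hm2k
        have hm1 : m + 1 = 0 := by rw [hmeq]; exact fin_mk_last_add_one _ hk
        have hfl : decide (m.val = 2*k+1-1 ∧ (m+1).val = 0) = true := by
          apply decide_eq_true
          refine ⟨by omega, ?_⟩
          rw [hm1]
          simp
        rw [hfl]
        rw [Lfun_pair, Lfun_pair, if_neg (by simp), if_pos rfl]
        have hS : Sfun hk ((P, m, false), v) = 0 := by
          rw [Sfun_pair, if_neg hmP, if_neg (by rintro ⟨hne, -, -⟩; exact hne hm2k)]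
        rw [hS]
        omega
      · have hmlt : m.val < 2*k := by have := m.isLt; omega
        have hm1v : (m + 1).val = m.val + 1 := by
          have hmeq : m = ⟨m.val, m.isLt⟩ := rfl
          conv_lhs => rw [hmeq, fin_mk_add_one m.val m.isLt (by omega) hk]
        have hfl : decide (m.val = 2*k+1-1 ∧ (m+1).val = 0) = false := by
          apply decide_eq_false
          rintro ⟨h1, -⟩
          omega
        rw [hfl]
        rw [Lfun_pair, Lfun_pair, if_neg (by simp), if_neg (by simp)]
        by_cases hc2 : m.val ≠ 2*k ∧ (m + 1) ∈ (P ∪ reqFilt hk v) \ respFilt hk v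
            ∧ (∃ i c, v = RRV.rv i c)
        · obtain ⟨-, hm1P, i, c, hvv⟩ := hc2
          subst hvv
          have hS' : Sfun hk ((((P ∪ reqFilt hk (RRV.rv i c)) \ respFilt hk (RRV.rv i c)),
              m + 1, false), v') = 1 := by
            rw [Sfun_pair]
            have hmem : (m+1) ∈ (((P ∪ reqFilt hk (RRV.rv i c)) \ respFilt hk (RRV.rv i c))
                ∪ reqFilt hk v') \ respFilt hk v' := by
              rw [Finset.mem_sdiff]
              refine ⟨Finset.mem_union_left _ hm1P, ?_⟩
              cases v' with
              | wv i' =>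
                have hi' : i'.val = i.val + 1 := hE
                rw [respFilt_wv_pos hk i' (by omega)]
                simp
              | x =>
                rw [respFilt_x hk]
                simp
              | vv i' => exact absurd hE (by simp [RRE])
              | pv i' c' => exact absurd hE (by simp [RRE])
              | rv i' c' => exact absurd hE (by simp [RRE])
              | y => exact absurd hE (by simp [RRE])
            rw [if_pos hmem]
          rw [hS']
          have hs1 := Sfun_le_one hk ((P, m, false), RRV.rv i c)
          omega
        · have hS : Sfun hk ((P, m, false), v) = 0 := by
            rw [Sfun_pair, if_neg hmP, if_neg hc2]
          rw [hS]
          have hs2 := Nat.zero_le (Sfun hk (((P ∪ reqFilt hk v) \ respFilt hk v, m+1, false), v'))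
          omega

/-- Soundness of `Lfun`: it bounds the attractor level from below. -/
lemma attr_le (hk : 0 < k) : ∀ n (u : RRMem (2*k+1) × RRV k),
    u ∈ AttrLvl (RRBuchiGraph (RRGraph k) (RRP k hk) (RRR k hk))
      (RRFinal (2*k+1) (RRV k)) n → Lfun hk u ≤ n := by
  intro n
  induction n with
  | zero =>
    intro u hu
    have hfl : u.1.2.2 = true := hu
    unfold Lfun
    rw [if_pos hfl]
  | succ n ih =>
    intro u hu
    simp only [AttrLvl, Set.mem_union, Set.mem_setOf_eq] at hu
    rcases hu with hu | ⟨hown, u', hE, hA⟩ | ⟨hown, ⟨u0, hE0⟩, hall⟩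
    · exact le_trans (ih u hu) (by omega)
    · have h1 := Lfun_step hk u u' hE
      have h2 := ih u' hA
      omega
    · have h1 := Lfun_step hk u u0 hE0
      have h2 := ih u0 (hall u0 hE0)
      omega

/-- Membership step for the attractor levels at Player-0 vertices. -/
lemma attr_step {W : Type*} (G : GameGraph W) (F : Set W) (n : ℕ) (u u' : W)
    (hown : G.owner u = false) (hE : G.E u u') (h : u' ∈ AttrLvl G F n) :
    u ∈ AttrLvl G F (n+1) := by
  simp only [AttrLvl, Set.mem_union, Set.mem_setOf_eq]
  exact Or.inr (Or.inl ⟨hown, u', hE, h⟩)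

end RRAttract


section RRValues

variable {k : ℕ}

lemma sW_fst (hk : 0 < k) (b : Fin k → Bool) (i : Fin k) :
    (sW hk b i).1 = (if i.val = 0 then insert 0 (reqsHi hk b 0) else reqsHi hk b i.val) := rfl

lemma PW (hk : 0 < k) (b : Fin k → Bool) (i : Fin k) :
    ((sW hk b i).1 ∪ reqFilt hk (RRV.wv i)) \ respFilt hk (RRV.wv i)
      = reqsHi hk b i.val := by
  rw [reqFilt_wv, sW_fst]
  by_cases hi : i.val = 0
  · have hieq : i = ⟨0, hk⟩ := Fin.ext hi
    rw [if_pos hi, hieq, respFilt_wv0]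
    rw [Finset.union_empty]
    ext j
    rw [Finset.mem_sdiff, Finset.mem_insert, Finset.mem_singleton]
    constructor
    · rintro ⟨h1 | h1, h2⟩
      · exact absurd h1 h2
      · exact h1
    · intro hj
      refine ⟨Or.inr hj, ?_⟩
      rintro rfl
      exact zero_not_mem_reqsHi hk b 0 hj
  · rw [if_neg hi, respFilt_wv_pos hk i hi]
    simp

lemma sR_fst (hk : 0 < k) (b : Fin k → Bool) (i : Fin k) :
    (sR hk b i).1 = reqsHi hk b i.val := rfl

lemma PRc (hk : 0 < k) (b : Fin k → Bool) (i : Fin k) (c : Bool) :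
    ((sR hk b i).1 ∪ reqFilt hk (RRV.rv i c)) \ respFilt hk (RRV.rv i c)
      = reqsHi hk b i.val \ {jIdx hk i c} := by
  rw [reqFilt_rv, respFilt_rv, Finset.union_empty, sR_fst]

lemma Lfun_sW_val (hk : 0 < k) (b : Fin k → Bool) (i : Fin k) :
    Lfun hk (sW hk b i, RRV.wv i) = 2*(k - i.val) + 1 := by
  have hsW : sW hk b i =
      ((if i.val = 0 then insert 0 (reqsHi hk b 0) else reqsHi hk b i.val),
       ⟨2*i.val, by have := i.isLt; omega⟩, false) := rfl
  rw [hsW, Lfun_pair, if_neg (by simp), Sfun_pair]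
  have hP : ((if i.val = 0 then insert 0 (reqsHi hk b 0) else reqsHi hk b i.val)
      ∪ reqFilt hk (RRV.wv i)) \ respFilt hk (RRV.wv i) = reqsHi hk b i.val := PW hk b i
  rw [hP]
  rw [if_neg (val_le_not_mem_reqsHi hk b i.val _ (le_refl _))]
  rw [if_neg (by rintro ⟨-, -, i', c', hveq⟩; cases hveq)]
  show 2*k+1 - 2*i.val + 0 = 2*(k - i.val) + 1
  have := i.isLt
  omega

lemma Lfun_sR_good (hk : 0 < k) (b : Fin k → Bool) (i : Fin k) :
    Lfun hk (sR hk b i, RRV.rv i (b i)) = 2*(k - i.val) := by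
  have hsR : sR hk b i =
      (reqsHi hk b i.val, ⟨2*i.val+1, by have := i.isLt; omega⟩, false) := rfl
  rw [hsR, Lfun_pair, if_neg (by simp), Sfun_pair]
  have hP : (reqsHi hk b i.val ∪ reqFilt hk (RRV.rv i (b i))) \ respFilt hk (RRV.rv i (b i))
      = reqsHi hk b (i.val+1) := by
    have := PRc hk b i (b i)
    rw [sR_fst] at this
    rw [this, reqsHi_succ hk b i]
  rw [hP]
  rw [if_neg (val_le_not_mem_reqsHi hk b (i.val+1) _
    (show 2*i.val+1 ≤ 2*(i.val+1) by omega))]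
  have hadd : (⟨2*i.val+1, by have := i.isLt; omega⟩ : Fin (2*k+1)) + 1
      = ⟨2*i.val+2, by have := i.isLt; omega⟩ := fin_mk_add_one _ _ _ hk
  rw [if_neg ?hneg]
  case hneg =>
    rintro ⟨-, hmem, -⟩
    rw [hadd] at hmem
    exact val_le_not_mem_reqsHi hk b (i.val+1) _
      (show 2*i.val+2 ≤ 2*(i.val+1) by omega) hmem
  show 2*k+1 - (2*i.val+1) + 0 = 2*(k - i.val)
  have := i.isLt
  omega

lemma Lfun_sR_bad (hk : 0 < k) (b : Fin k → Bool) (i : Fin k) (c : Bool) (hc : c ≠ b i) :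
    Lfun hk (sR hk b i, RRV.rv i c) = 2*(k - i.val) + 1 := by
  have hsR : sR hk b i =
      (reqsHi hk b i.val, ⟨2*i.val+1, by have := i.isLt; omega⟩, false) := rfl
  rw [hsR, Lfun_pair, if_neg (by simp), Sfun_pair]
  have hP : (reqsHi hk b i.val ∪ reqFilt hk (RRV.rv i c)) \ respFilt hk (RRV.rv i c)
      = reqsHi hk b i.val := by
    have h1 := PRc hk b i c
    rw [sR_fst] at h1
    rw [h1]
    apply Finset.sdiff_eq_self_of_disjoint
    rw [Finset.disjoint_singleton_right]
    exact jIdx_not_mem_reqsHi hk b i c hc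
  rw [hP]
  have hik := i.isLt
  cases hbi : b i with
  | false =>
    -- the marker 2i+1 is a still-open request
    have hmem : (⟨2*i.val+1, by omega⟩ : Fin (2*k+1)) ∈ reqsHi hk b i.val := by
      rw [mem_reqsHi_odd hk b i.val i.isLt]
      have : (⟨i.val, i.isLt⟩ : Fin k) = i := rfl
      rw [this, hbi]
    rw [if_pos hmem]
    show 2*k+1 - (2*i.val+1) + 1 = 2*(k - i.val) + 1
    omega
  | true =>
    have hnmem : (⟨2*i.val+1, by omega⟩ : Fin (2*k+1)) ∉ reqsHi hk b i.val := by
      rw [mem_reqsHi_odd hk b i.val i.isLt]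
      have : (⟨i.val, i.isLt⟩ : Fin k) = i := rfl
      rw [this, hbi]
      simp
    rw [if_neg hnmem]
    have hadd : (⟨2*i.val+1, by omega⟩ : Fin (2*k+1)) + 1
        = ⟨2*i.val+2, by omega⟩ := fin_mk_add_one _ _ _ hk
    have hmem2 : (⟨2*i.val+2, by omega⟩ : Fin (2*k+1)) ∈ reqsHi hk b i.val := by
      rw [mem_reqsHi_even hk b i.val i.isLt]
      have : (⟨i.val, i.isLt⟩ : Fin k) = i := rfl
      rw [this, hbi]
    rw [if_pos ?hpos]
    case hpos =>
      refine ⟨show 2*i.val+1 ≠ 2*k by have := i.isLt; omega, ?_, ⟨i, c, rfl⟩⟩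
      rw [hadd]
      exact hmem2
    show 2*k+1 - (2*i.val+1) + 1 = 2*(k - i.val) + 1
    omega

end RRValues


section RRUpper

variable {k : ℕ}

lemma attr_final (hk : 0 < k) :
    (((∅ : Finset (Fin (2*k+1))), (0 : Fin (2*k+1)), true), RRV.y) ∈
      AttrLvl (RRBuchiGraph (RRGraph k) (RRP k hk) (RRR k hk))
        (RRFinal (2*k+1) (RRV k)) 0 := by
  simp only [AttrLvl]
  exact rfl

lemma attr_x (hk : 0 < k) :
    (((∅ : Finset (Fin (2*k+1))), (⟨2*k, by omega⟩ : Fin (2*k+1)), false), RRV.x) ∈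
      AttrLvl (RRBuchiGraph (RRGraph k) (RRP k hk) (RRR k hk))
        (RRFinal (2*k+1) (RRV k)) 1 :=
  attr_step _ _ 0 (((∅ : Finset (Fin (2*k+1))), (⟨2*k, by omega⟩ : Fin (2*k+1)), false), RRV.x)
    (((∅ : Finset (Fin (2*k+1))), (0 : Fin (2*k+1)), true), RRV.y)
    rfl ⟨trivial, (updX hk).symm⟩ (attr_final hk)

lemma sW_succ_eq (hk : 0 < k) (b : Fin k → Bool) (i : ℕ) (hi1 : i+1 < k) :
    sW hk b ⟨i+1, hi1⟩ = (reqsHi hk b (i+1), ⟨2*i+2, by omega⟩, false) := by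
  unfold sW
  rw [if_neg (Nat.succ_ne_zero i)]
  exact Prod.ext rfl (Prod.ext (Fin.ext (show 2*(i+1) = 2*i+2 by ring)) rfl)

lemma attrR (hk : 0 < k) (b : Fin k → Bool) :
    ∀ n (i : Fin k), k - i.val = n + 1 →
      (sR hk b i, RRV.rv i (b i)) ∈
        AttrLvl (RRBuchiGraph (RRGraph k) (RRP k hk) (RRR k hk))
          (RRFinal (2*k+1) (RRV k)) (2*(n+1)) := by
  intro n
  induction n with
  | zero =>
    intro i hi
    have hik := i.isLt
    have hupd : ((∅ : Finset (Fin (2*k+1))), (⟨2*k, by omega⟩ : Fin (2*k+1)), false)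
        = updRR (RRP k hk) (RRR k hk) (sR hk b i) (RRV.rv i (b i)) := by
      rw [updR hk b i]
      refine Prod.ext ?_ (Prod.ext (Fin.ext (show 2*k = 2*i.val+2 by omega)) rfl)
      rw [show i.val+1 = k by omega, reqsHi_k hk b]
    exact attr_step _ _ 1 (sR hk b i, RRV.rv i (b i))
      (((∅ : Finset (Fin (2*k+1))), (⟨2*k, by omega⟩ : Fin (2*k+1)), false), RRV.x)
      rfl ⟨show i.val = k - 1 by omega, hupd⟩ (attr_x hk)
  | succ n ih =>
    intro i hi
    have hik := i.isLt
    have hi1 : i.val + 1 < k := by omega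
    have hR' := ih ⟨i.val+1, hi1⟩ (show k - (i.val+1) = n+1 by omega)
    have hW' : (sW hk b ⟨i.val+1, hi1⟩, RRV.wv ⟨i.val+1, hi1⟩) ∈
        AttrLvl (RRBuchiGraph (RRGraph k) (RRP k hk) (RRR k hk))
          (RRFinal (2*k+1) (RRV k)) (2*(n+1)+1) :=
      attr_step _ _ (2*(n+1)) (sW hk b ⟨i.val+1, hi1⟩, RRV.wv ⟨i.val+1, hi1⟩)
        (sR hk b ⟨i.val+1, hi1⟩, RRV.rv ⟨i.val+1, hi1⟩ (b ⟨i.val+1, hi1⟩))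
        rfl ⟨rfl, (updW hk b ⟨i.val+1, hi1⟩).symm⟩ hR'
    have hupd : sW hk b ⟨i.val+1, hi1⟩
        = updRR (RRP k hk) (RRR k hk) (sR hk b i) (RRV.rv i (b i)) := by
      rw [updR hk b i, sW_succ_eq hk b i.val hi1]
    have hst := attr_step (RRBuchiGraph (RRGraph k) (RRP k hk) (RRR k hk))
      (RRFinal (2*k+1) (RRV k)) (2*(n+1)+1) (sR hk b i, RRV.rv i (b i))
      (sW hk b ⟨i.val+1, hi1⟩, RRV.wv ⟨i.val+1, hi1⟩)
      rfl ⟨show (⟨i.val+1, hi1⟩ : Fin k).val = i.val + 1 from rfl, hupd⟩ hW'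
    have heq : (2*(n+1)+1)+1 = 2*(n+1+1) := by ring
    rwa [heq] at hst

lemma attrW (hk : 0 < k) (b : Fin k → Bool) (i : Fin k) :
    (sW hk b i, RRV.wv i) ∈
      AttrLvl (RRBuchiGraph (RRGraph k) (RRP k hk) (RRR k hk))
        (RRFinal (2*k+1) (RRV k)) (2*(k - i.val)+1) := by
  have h1 := attrR hk b (k - i.val - 1) i (by have := i.isLt; omega)
  have h2 : 2*((k - i.val - 1)+1) = 2*(k - i.val) := by have := i.isLt; omega
  rw [h2] at h1
  exact attr_step _ _ (2*(k - i.val)) (sW hk b i, RRV.wv i)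
    (sR hk b i, RRV.rv i (b i)) rfl ⟨rfl, (updW hk b i).symm⟩ h1

/-- The attractor strategy must mimic Player 1's choice. -/
lemma f'_correct (hk : 0 < k) (b : Fin k → Bool)
    (f' : RRMem (2*k+1) × RRV k → RRMem (2*k+1) × RRV k)
    (hleg : ∀ p, (RRBuchiGraph (RRGraph k) (RRP k hk) (RRR k hk)).owner p = false →
      (RRBuchiGraph (RRGraph k) (RRP k hk) (RRR k hk)).E p (f' p))
    (hattr : IsAttractorStrategy (RRBuchiGraph (RRGraph k) (RRP k hk) (RRR k hk))
      (RRFinal (2*k+1) (RRV k)) f') (i : Fin k) :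
    f' (sW hk b i, RRV.wv i) = (sR hk b i, RRV.rv i (b i)) := by
  have hup := attrW hk b i
  have hnot : (sW hk b i, RRV.wv i) ∉
      AttrLvl (RRBuchiGraph (RRGraph k) (RRP k hk) (RRR k hk))
        (RRFinal (2*k+1) (RRV k)) (2*(k - i.val)) := by
    intro hmem
    have h1 := attr_le hk _ _ hmem
    rw [Lfun_sW_val hk b i] at h1
    omega
  have h3 := hattr (sW hk b i, RRV.wv i) (2*(k - i.val)) rfl hup hnot
  have hE := hleg (sW hk b i, RRV.wv i) rfl
  have hE1 : RRE k (RRV.wv i) (f' (sW hk b i, RRV.wv i)).2 := hE.1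
  have hE2 : (f' (sW hk b i, RRV.wv i)).1 = sR hk b i := by
    have h5 := hE.2
    rwa [updW hk b i] at h5
  cases hq : (f' (sW hk b i, RRV.wv i)).2 with
  | rv i' c =>
    rw [hq] at hE1
    have hii : i = i' := hE1
    subst hii
    by_cases hc : c = b i
    · subst hc
      exact Prod.ext hE2 hq
    · exfalso
      have hfq : f' (sW hk b i, RRV.wv i) = (sR hk b i, RRV.rv i c) := Prod.ext hE2 hq
      rw [hfq] at h3
      have h4 := attr_le hk _ _ h3
      rw [Lfun_sR_bad hk b i c hc] at h4
      omega
  | vv i' => rw [hq] at hE1; exact absurd hE1 (by simp [RRE])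
  | pv i' c => rw [hq] at hE1; exact absurd hE1 (by simp [RRE])
  | wv i' => rw [hq] at hE1; exact absurd hE1 (by simp [RRE])
  | x => rw [hq] at hE1; exact absurd hE1 (by simp [RRE])
  | y => rw [hq] at hE1; exact absurd hE1 (by simp [RRE])

/-- The canonical play is consistent with the strategy induced by `f'`. -/
lemma playB_consistent (hk : 0 < k) (b : Fin k → Bool)
    (f' : RRMem (2*k+1) × RRV k → RRMem (2*k+1) × RRV k)
    (hleg : ∀ p, (RRBuchiGraph (RRGraph k) (RRP k hk) (RRR k hk)).owner p = false →
      (RRBuchiGraph (RRGraph k) (RRP k hk) (RRR k hk)).E p (f' p))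
    (hattr : IsAttractorStrategy (RRBuchiGraph (RRGraph k) (RRP k hk) (RRR k hk))
      (RRFinal (2*k+1) (RRV k)) f') :
    ∀ n, RROwner k (playB hk b n) = false →
      playB hk b (n+1) = (f' (memTr (RRP k hk) (RRR k hk) (∅, 0, false) (playB hk b) n,
        playB hk b n)).2 := by
  intro n hown
  have hE1 : RRE k (playB hk b n)
      ((f' (memTr (RRP k hk) (RRR k hk) (∅, 0, false) (playB hk b) n,
        playB hk b n)).2) :=
    (hleg (memTr (RRP k hk) (RRR k hk) (∅, 0, false) (playB hk b) n,
      playB hk b n) hown).1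
  rcases Nat.lt_or_ge n (2*k) with h2k | h2k
  · exfalso
    rcases Nat.even_or_odd n with ⟨i, hi⟩ | ⟨i, hi⟩
    · rw [show n = 2*i by omega, playB_vv hk b i (by omega)] at hown
      exact absurd hown (by simp [RROwner])
    · rw [show n = 2*i+1 by omega, playB_pv hk b i (by omega)] at hown
      exact absurd hown (by simp [RROwner])
  · rcases Nat.lt_or_ge n (4*k) with h4k | h4k
    · rcases Nat.even_or_odd (n - 2*k) with ⟨i, hi⟩ | ⟨i, hi⟩
      · have hik : i < k := by omega
        have hn : n = 2*k+2*i := by omega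
        subst hn
        rw [playB_wv hk b i hik, memPhase2 hk b i hik,
          f'_correct hk b f' hleg hattr ⟨i, hik⟩]
        rw [playB_rv hk b i hik]
      · have hik : i < k := by omega
        have hn : n = 2*k+2*i+1 := by omega
        subst hn
        rw [playB_rv hk b i hik] at hE1
        rw [playB_rv hk b i hik]
        cases hq : (f' (memTr (RRP k hk) (RRR k hk) (∅, 0, false) (playB hk b) (2*k+2*i+1),
            RRV.rv ⟨i, hik⟩ (b ⟨i, hik⟩))).2 with
        | wv i' =>
          rw [hq] at hE1
          have hval : i'.val = i + 1 := hE1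
          have hik1 : i + 1 < k := by have := i'.isLt; omega
          rw [show 2*k+2*i+1+1 = 2*k+2*(i+1) by ring, playB_wv hk b (i+1) hik1]
          exact congrArg RRV.wv (Fin.ext hval.symm)
        | x =>
          rw [hq] at hE1
          rw [show 2*k+2*i+1+1 = 4*k by
            have hval : i = k - 1 := hE1
            omega, playB_x hk b]
        | vv i' => rw [hq] at hE1; exact absurd hE1 (by simp [RRE])
        | pv i' c => rw [hq] at hE1; exact absurd hE1 (by simp [RRE])
        | rv i' c => rw [hq] at hE1; exact absurd hE1 (by simp [RRE])
        | y => rw [hq] at hE1; exact absurd hE1 (by simp [RRE])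
    · rcases Nat.eq_or_lt_of_le h4k with h4e | h4lt
      · have hn : n = 4*k := h4e.symm
        subst hn
        rw [playB_x hk b] at hE1
        rw [playB_x hk b]
        cases hq : (f' (memTr (RRP k hk) (RRR k hk) (∅, 0, false) (playB hk b) (4*k),
            RRV.x)).2 with
        | y => rw [playB_y hk b (4*k+1) (by omega)]
        | vv i' => rw [hq] at hE1; exact absurd hE1 (by simp [RRE])
        | pv i' c => rw [hq] at hE1; exact absurd hE1 (by simp [RRE])
        | wv i' => rw [hq] at hE1; exact absurd hE1 (by simp [RRE])
        | rv i' c => rw [hq] at hE1; exact absurd hE1 (by simp [RRE])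
        | x => rw [hq] at hE1; exact absurd hE1 (by simp [RRE])
      · rw [playB_y hk b n h4lt] at hE1
        rw [playB_y hk b n h4lt]
        cases hq : (f' (memTr (RRP k hk) (RRR k hk) (∅, 0, false) (playB hk b) n,
            RRV.y)).2 with
        | y => rw [playB_y hk b (n+1) (by omega)]
        | vv i' => rw [hq] at hE1; exact absurd hE1 (by simp [RRE])
        | pv i' c => rw [hq] at hE1; exact absurd hE1 (by simp [RRE])
        | wv i' => rw [hq] at hE1; exact absurd hE1 (by simp [RRE])
        | rv i' c => rw [hq] at hE1; exact absurd hE1 (by simp [RRE])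
        | x => rw [hq] at hE1; exact absurd hE1 (by simp [RRE])

end RRUpper

/-- Theorem 2 of the paper. In the Request-Response example game
`Γ_k = (G_k, Ω_k)`, Player 0 wins from `v`, and every positional winning strategy of the
simulating Büchi game `Γ'_k` from `((∅,1,0), v)` that reaches a final vertex as soon as
possible (an attractor strategy) yields, via the memory of the game simulation, a winning
strategy for Player 0 in `Γ_k` from `v` every finite-state implementation of which has at
least `2^k` memory states. -/
theorem rr_example_exponential_memory {k : ℕ} (hk : 0 < k) :
    ForcesFrom (RRGraph k) (RRWin (RRP k hk) (RRR k hk)) (RRV.vv ⟨0, hk⟩) ∧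
    (∀ f' : RRMem (2 * k + 1) × RRV k → RRMem (2 * k + 1) × RRV k,
      -- `f'` is a (legal) positional strategy for Player 0 in `Γ'_k`
      (∀ p, (RRBuchiGraph (RRGraph k) (RRP k hk) (RRR k hk)).owner p = false →
        (RRBuchiGraph (RRGraph k) (RRP k hk) (RRR k hk)).E p (f' p)) →
      -- `f'` is winning from `((∅,1,0), v)`
      (∀ ρ' : ℕ → RRMem (2 * k + 1) × RRV k,
        ρ' 0 = ((∅, 0, false), RRV.vv ⟨0, hk⟩) →
        IsPlay (RRBuchiGraph (RRGraph k) (RRP k hk) (RRR k hk)) ρ' →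
        (∀ i, (RRBuchiGraph (RRGraph k) (RRP k hk) (RRR k hk)).owner (ρ' i) = false →
          ρ' (i + 1) = f' (ρ' i)) →
        BuchiWin (RRFinal (2 * k + 1) (RRV k)) ρ') →
      -- `f'` reaches a final vertex as soon as possible
      IsAttractorStrategy (RRBuchiGraph (RRGraph k) (RRP k hk) (RRR k hk))
        (RRFinal (2 * k + 1) (RRV k)) f' →
      -- then the induced strategy `f_k` on `Γ_k` is winning from `v` ...
      ((∀ ρ : ℕ → RRV k, ρ 0 = RRV.vv ⟨0, hk⟩ → IsPlay (RRGraph k) ρ →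
        (∀ i, RROwner k (ρ i) = false →
          ρ (i + 1) = (f' (memTr (RRP k hk) (RRR k hk) (∅, 0, false) ρ i, ρ i)).2) →
        RRWin (RRP k hk) (RRR k hk) ρ) ∧
      -- ... and every Mealy machine implementing `f_k` has at least `2^k` states
      (∀ (M : Type) [Fintype M] (Mc : Mealy (RRV k) M),
        (∀ ρ : ℕ → RRV k, ρ 0 = RRV.vv ⟨0, hk⟩ → IsPlay (RRGraph k) ρ →
          (∀ i, RROwner k (ρ i) = false →
            ρ (i + 1) = (f' (memTr (RRP k hk) (RRR k hk) (∅, 0, false) ρ i, ρ i)).2) →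
          ∀ i, RROwner k (ρ i) = false →
            Mc.out (mSt Mc ρ i) (ρ i) =
              (f' (memTr (RRP k hk) (RRR k hk) (∅, 0, false) ρ i, ρ i)).2) →
        2 ^ k ≤ Fintype.card M))) := by
  refine ⟨part1 hk, ?_⟩
  intro f' hleg hwin hattr
  refine ⟨?_, ?_⟩
  · intro ρ h0 hp _
    exact master_win hk ρ hp
  · intro M _ Mc hMc
    have hout : ∀ (b : Fin k → Bool) (i : ℕ) (hi : i < k),
        Mc.out (mSt Mc (playB hk b) (2*k+2*i)) (RRV.wv ⟨i, hi⟩)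
          = RRV.rv ⟨i, hi⟩ (b ⟨i, hi⟩) := by
      intro b i hi
      have h1 := hMc (playB hk b) (playB_zero hk b) (playB_isPlay hk b)
        (playB_consistent hk b f' hleg hattr) (2*k+2*i)
        (by rw [playB_wv hk b i hi]; rfl)
      rw [playB_wv hk b i hi, memPhase2 hk b i hi,
        f'_correct hk b f' hleg hattr ⟨i, hi⟩] at h1
      exact h1
    have mSt_succ : ∀ (ρ : ℕ → RRV k) (n : ℕ),
        mSt Mc ρ (n+1) = Mc.upd (mSt Mc ρ n) (ρ n) := fun _ _ => rfl
    have hinj : Function.Injective (fun b : Fin k → Bool => mSt Mc (playB hk b) (2*k)) := by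
      intro b b' heq
      simp only at heq
      have claim : ∀ i, i ≤ k →
          mSt Mc (playB hk b) (2*k+2*i) = mSt Mc (playB hk b') (2*k+2*i) ∧
          ∀ l : Fin k, l.val < i → b l = b' l := by
        intro i
        induction i with
        | zero =>
          refine fun _ => ⟨by simpa using heq, ?_⟩
          intro l hl
          omega
        | succ i ih =>
          intro hik
          have hi : i < k := by omega
          obtain ⟨hst, hbl⟩ := ih (by omega)
          have hbi : b ⟨i, hi⟩ = b' ⟨i, hi⟩ := by
            have o1 := hout b i hi
            have o2 := hout b' i hi
            rw [hst] at o1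
            have o3 := o1.symm.trans o2
            injection o3 with h1 h2
          refine ⟨?_, ?_⟩
          · have e : 2*k+2*(i+1) = ((2*k+2*i)+1)+1 := by ring
            rw [e]
            simp only [mSt_succ]
            rw [hst, playB_wv hk b i hi, playB_wv hk b' i hi,
              playB_rv hk b i hi, playB_rv hk b' i hi, hbi]
          · intro l hl
            rcases Nat.lt_or_ge l.val i with h | h
            · exact hbl l h
            · have hleq : l = ⟨i, hi⟩ := Fin.ext (show l.val = i by omega)
              rw [hleq]
              exact hbi
      funext l
      exact (claim k (le_refl k)).2 l l.isLt
    have hcard := Fintype.card_le_of_injective _ hinj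
    calc 2 ^ k = Fintype.card (Fin k → Bool) := by
          rw [Fintype.card_fun, Fintype.card_bool, Fintype.card_fin]
      _ ≤ Fintype.card M := hcard

end Games
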